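/- Let p be a prime with p > 3 and let q = (2^(p-1) - 1)/p be the Fermat quotient of p to base 2. Then, in ZMod p^2, the sum of the inverses of the integers 1, 2, ..., (p-1)/2 is congruent to -2q + p·q^2 (Lehmer's congruence). -/

import Mathlib

open Finset

lemma zmod_inv_eq_of_mul_ (n : ℕ) (x y : ZMod n) (hx : IsUnit x) (h : x * y = 1) : x⁻¹ = y := by
  have h1 := ZMod.inv_mul_of_unit x hx
  calc x⁻¹ = x⁻¹ * (x * y) := by rw [h, mul_one]
    _ = (x⁻¹ * x) * y := by ring
    _ = y := by rw [h1, one_mul]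

lemma zmod_cast_inv_ {n m : ℕ} (h : m ∣ n) (x : ZMod n) (hx : IsUnit x) :
    ZMod.castHom h (ZMod m) x⁻¹ = (ZMod.castHom h (ZMod m) x)⁻¹ := by
  have h1 : x * x⁻¹ = 1 := ZMod.mul_inv_of_unit x hx
  have h2 : (ZMod.castHom h (ZMod m) x) * (ZMod.castHom h (ZMod m) x⁻¹) = 1 := by
    rw [← map_mul, h1, map_one]
  exact (zmod_inv_eq_of_mul_ _ _ _ (IsUnit.of_mul_eq_one _ h2) h2).symm

lemma zmod_descent_ (p : ℕ) (hp : p ≠ 0) (a b : ZMod (p^3))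
    (h : (p : ZMod (p^3)) * a = (p : ZMod (p^3))^2 * b) :
    ZMod.castHom (pow_dvd_pow p (by norm_num : 2 ≤ 3)) (ZMod (p^2)) a
      = (p : ZMod (p^2)) * ZMod.castHom (pow_dvd_pow p (by norm_num : 2 ≤ 3)) (ZMod (p^2)) b := by
  have hne3 : NeZero (p^3) := ⟨pow_ne_zero _ hp⟩
  have hne2 : NeZero (p^2) := ⟨pow_ne_zero _ hp⟩
  have ha : ((a.val : ℕ) : ZMod (p^3)) = a := by rw [ZMod.natCast_val, ZMod.cast_id]
  have hb : ((b.val : ℕ) : ZMod (p^3)) = b := by rw [ZMod.natCast_val, ZMod.cast_id]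
  have h2 : (((p : ℤ) * a.val : ℤ) : ZMod (p^3)) = (((p:ℤ)^2 * b.val : ℤ) : ZMod (p^3)) := by
    push_cast
    rw [ha, hb]; exact h
  rw [ZMod.intCast_eq_intCast_iff] at h2
  have h3 : ((p:ℤ)^3) ∣ (p:ℤ) * a.val - (p:ℤ)^2 * b.val := by
    have := Int.ModEq.dvd h2.symm; push_cast at this; convert this using 1
  have h4 : ((p:ℤ)^2) ∣ (a.val : ℤ) - (p:ℤ) * b.val := by
    rcases h3 with ⟨c, hc⟩
    exact ⟨c, mul_left_cancel₀ (show (p:ℤ) ≠ 0 by exact_mod_cast hp) (by linear_combination hc)⟩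
  have h5 : ((a.val : ℤ) : ZMod (p^2)) = (((p:ℤ) * b.val : ℤ) : ZMod (p^2)) := by
    rw [ZMod.intCast_eq_intCast_iff_dvd_sub]
    push_cast
    rcases h4 with ⟨c, hc⟩
    exact ⟨-c, by linear_combination -hc⟩
  have hca : ((a.val : ℕ) : ZMod (p^2)) = ZMod.castHom (pow_dvd_pow p (by norm_num : 2 ≤ 3)) (ZMod (p^2)) a := by
    rw [ZMod.castHom_apply, ZMod.natCast_val]
  have hcb : ((b.val : ℕ) : ZMod (p^2)) = ZMod.castHom (pow_dvd_pow p (by norm_num : 2 ≤ 3)) (ZMod (p^2)) b := by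
    rw [ZMod.castHom_apply, ZMod.natCast_val]
  push_cast at h5
  rw [← hca, ← hcb, ← h5]

lemma zmod_scale_ (p : ℕ) (hp : p ≠ 0) (a b : ZMod (p^2))
    (h : ZMod.castHom (dvd_pow_self p (by norm_num : 2 ≠ 0)) (ZMod p) a
       = ZMod.castHom (dvd_pow_self p (by norm_num : 2 ≠ 0)) (ZMod p) b) :
    (p : ZMod (p^2)) * a = (p : ZMod (p^2)) * b := by
  have hne2 : NeZero (p^2) := ⟨pow_ne_zero _ hp⟩
  have hnep : NeZero p := ⟨hp⟩
  have hca : ((a.val : ℕ) : ZMod p) = ZMod.castHom (dvd_pow_self p (by norm_num : 2 ≠ 0)) (ZMod p) a := by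
    rw [ZMod.castHom_apply, ZMod.natCast_val]
  have hcb : ((b.val : ℕ) : ZMod p) = ZMod.castHom (dvd_pow_self p (by norm_num : 2 ≠ 0)) (ZMod p) b := by
    rw [ZMod.castHom_apply, ZMod.natCast_val]
  have h2 : ((a.val : ℤ) : ZMod p) = ((b.val : ℤ) : ZMod p) := by push_cast [hca, hcb, h]; rfl
  rw [ZMod.intCast_eq_intCast_iff] at h2
  have h3 : (p : ℤ) ∣ (b.val : ℤ) - a.val := Int.ModEq.dvd h2
  rcases h3 with ⟨c, hc⟩
  have h4 : (((p : ℤ) * a.val : ℤ) : ZMod (p^2)) = (((p:ℤ) * b.val : ℤ) : ZMod (p^2)) := by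
    rw [ZMod.intCast_eq_intCast_iff_dvd_sub]
    exact ⟨c, by push_cast; linear_combination (p:ℤ)*hc⟩
  have ha : ((a.val : ℕ) : ZMod (p^2)) = a := by rw [ZMod.natCast_val, ZMod.cast_id]
  have hb : ((b.val : ℕ) : ZMod (p^2)) = b := by rw [ZMod.natCast_val, ZMod.cast_id]
  push_cast at h4
  rw [ha, hb] at h4
  exact h4

lemma prod_expand_ {R : Type*} [CommRing R] (c : R) (hc : c^3 = 0) (s : Finset ℕ) (x : ℕ → R) :
    2 * ∏ i ∈ s, (1 + c * x i)
      = 2 + 2*c*(∑ i ∈ s, x i) + c^2*((∑ i ∈ s, x i)^2 - ∑ i ∈ s, (x i)^2) := by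
  induction s using Finset.cons_induction with
  | empty => simp
  | cons a s ha ih =>
    rw [Finset.prod_cons, Finset.sum_cons, Finset.sum_cons]
    linear_combination (1 + c * x a) * ih
      + (x a * ((∑ i ∈ s, x i)^2 - ∑ i ∈ s, (x i)^2)) * hc


lemma fact_two_mul (m : ℕ) :
    (2*m).factorial = m.factorial * (∏ i ∈ Icc 1 m, (2*i - 1)) * 2^m := by
  induction m with
  | zero => simp
  | succ n ih =>
    have h2 : 2*(n+1) = (2*n+1)+1 := by ring
    rw [h2, Nat.factorial_succ, Nat.factorial_succ, ih,
      Finset.prod_Icc_succ_top (by omega : 1 ≤ n + 1), Nat.factorial_succ]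
    have h3 : 2*(n+1) - 1 = 2*n+1 := by omega
    rw [h3]
    ring

lemma fact_shift (m : ℕ) :
    (∏ i ∈ Icc 1 m, (m + i)) * m.factorial = (2*m).factorial := by
  have h1 : m.factorial = ∏ i ∈ Ico 1 (m+1), i := (Finset.prod_Ico_id_eq_factorial m).symm
  have h2 : (∏ i ∈ Icc 1 m, (m + i)) = ∏ k ∈ Ico (m+1) (2*m+1), k := by
    apply Finset.prod_nbij' (fun i => m + i) (fun k => k - m)
    · intro a ha; simp only [mem_Icc] at ha; simp only [mem_Ico]; omega
    · intro a ha; simp only [mem_Ico] at ha; simp only [mem_Icc]; omega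
    · intro a ha; simp only [mem_Icc] at ha; omega
    · intro a ha; simp only [mem_Ico] at ha; omega
    · intro a ha; rfl
  rw [h1, h2, mul_comm, Finset.prod_Ico_consecutive _ (by omega) (by omega),
    Finset.prod_Ico_id_eq_factorial]

lemma key_prod_ (m : ℕ) :
    ∏ i ∈ Icc 1 m, (2*m+1 - i) = 2^m * ∏ i ∈ Icc 1 m, (2*m+1 - 2*i) := by
  have hL : ∏ i ∈ Icc 1 m, (2*m+1 - i) = ∏ i ∈ Icc 1 m, (m + i) := by
    apply Finset.prod_nbij' (fun i => m + 1 - i) (fun i => m + 1 - i)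
    · intro a ha; simp only [mem_Icc] at ha ⊢; omega
    · intro a ha; simp only [mem_Icc] at ha ⊢; omega
    · intro a ha; simp only [mem_Icc] at ha; omega
    · intro a ha; simp only [mem_Icc] at ha; omega
    · intro a ha; simp only [mem_Icc] at ha; omega
  have hR : ∏ i ∈ Icc 1 m, (2*m+1 - 2*i) = ∏ i ∈ Icc 1 m, (2*i - 1) := by
    apply Finset.prod_nbij' (fun i => m + 1 - i) (fun i => m + 1 - i)
    · intro a ha; simp only [mem_Icc] at ha ⊢; omega
    · intro a ha; simp only [mem_Icc] at ha ⊢; omega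
    · intro a ha; simp only [mem_Icc] at ha; omega
    · intro a ha; simp only [mem_Icc] at ha; omega
    · intro a ha; simp only [mem_Icc] at ha; omega
  rw [hL, hR]
  apply Nat.eq_of_mul_eq_mul_left (Nat.factorial_pos m)
  calc m.factorial * ∏ i ∈ Icc 1 m, (m + i)
      = (∏ i ∈ Icc 1 m, (m + i)) * m.factorial := by ring
    _ = (2*m).factorial := fact_shift m
    _ = m.factorial * (∏ i ∈ Icc 1 m, (2*i-1)) * 2^m := fact_two_mul m
    _ = m.factorial * (2^m * ∏ i ∈ Icc 1 m, (2*i-1)) := by ring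


lemma sq_inv_sum_zero_ (p : ℕ) (hp : p.Prime) (hp3 : 3 < p) :
    ∑ i ∈ Icc 1 ((p-1)/2), (((i:ℕ) : ZMod p)⁻¹)^2 = 0 := by
  haveI : Fact p.Prime := ⟨hp⟩
  set m := (p-1)/2 with hm
  obtain ⟨k, hk⟩ := hp.odd_of_ne_two (by omega)
  have hmp : p = 2*m + 1 := by omega
  -- full sum over 1..p-1 equals sum of squares over ZMod p, which is 0
  have hcard : Fintype.card (ZMod p) = p := ZMod.card p
  have hzero : ∑ x : ZMod p, x^2 = 0 :=
    FiniteField.sum_pow_lt_card_sub_one (ZMod p) 2 (by omega)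
  have hfull : ∑ i ∈ Icc 1 (p-1), (((i:ℕ) : ZMod p)⁻¹)^2 = ∑ x : ZMod p, x^2 := by
    rw [show ∑ x : ZMod p, x^2 = ∑ x ∈ (univ.erase (0:ZMod p)), x^2 from
      (Finset.sum_erase _ (by norm_num)).symm]
    apply Finset.sum_nbij' (i := fun i => ((i:ℕ) : ZMod p)⁻¹) (j := fun x => (x⁻¹ : ZMod p).val)
    · intro a ha
      simp only [mem_Icc] at ha
      have : ((a:ℕ) : ZMod p) ≠ 0 := by
        rw [Ne, ZMod.natCast_eq_zero_iff]
        intro hd; have := Nat.le_of_dvd (by omega) hd; omega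
      simp only [Finset.mem_erase, Finset.mem_univ, and_true]
      exact inv_ne_zero this
    · intro x hx
      simp only [Finset.mem_erase, Finset.mem_univ, and_true] at hx
      have hxi : (x⁻¹ : ZMod p) ≠ 0 := inv_ne_zero hx
      have h1 : 0 < (x⁻¹ : ZMod p).val := by
        rcases Nat.eq_zero_or_pos (x⁻¹ : ZMod p).val with h | h
        · exact absurd ((ZMod.val_eq_zero _).mp h) hxi
        · exact h
      have h2 : (x⁻¹ : ZMod p).val < p := ZMod.val_lt _
      simp only [mem_Icc]; omega
    · intro a ha
      simp only [mem_Icc] at ha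
      have hlt : a < p := by omega
      rw [inv_inv, ZMod.val_cast_of_lt hlt]
    · intro x hx
      rw [ZMod.natCast_val, ZMod.cast_id, inv_inv]
    · intro a ha; rfl
  -- splitting and reflection
  have hsplit : ∑ i ∈ Icc 1 (p-1), (((i:ℕ) : ZMod p)⁻¹)^2
      = (∑ i ∈ Icc 1 m, (((i:ℕ) : ZMod p)⁻¹)^2) + ∑ i ∈ Icc (m+1) (p-1), (((i:ℕ) : ZMod p)⁻¹)^2 := by
    have h0 : Icc 1 (p-1) = Ioc 0 (p-1) := by rw [← Finset.Icc_add_one_left_eq_Ioc]; rfl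
    have h1 : Icc 1 m = Ioc 0 m := by rw [← Finset.Icc_add_one_left_eq_Ioc]; rfl
    have h2 : Icc (m+1) (p-1) = Ioc m (p-1) := by rw [← Finset.Icc_add_one_left_eq_Ioc]
    rw [h0, h1, h2, Finset.sum_Ioc_consecutive _ (by omega) (by omega)]
  have hrefl : ∑ i ∈ Icc (m+1) (p-1), (((i:ℕ) : ZMod p)⁻¹)^2
      = ∑ i ∈ Icc 1 m, (((i:ℕ) : ZMod p)⁻¹)^2 := by
    apply Finset.sum_nbij' (i := fun i => p - i) (j := fun i => p - i)
    · intro a ha; simp only [mem_Icc] at ha ⊢; omega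
    · intro a ha; simp only [mem_Icc] at ha ⊢; omega
    · intro a ha; simp only [mem_Icc] at ha; omega
    · intro a ha; simp only [mem_Icc] at ha; omega
    · intro a ha
      simp only [mem_Icc] at ha
      have hcast : (((p - a : ℕ)) : ZMod p) = -((a:ℕ) : ZMod p) := by
        have : ((p - a : ℕ) : ZMod p) = ((p:ℕ) : ZMod p) - ((a:ℕ) : ZMod p) :=
          Nat.cast_sub (by omega)
        rw [this, ZMod.natCast_self, zero_sub]
      rw [hcast, inv_neg, neg_sq]
  have h2W : (2 : ZMod p) * ∑ i ∈ Icc 1 m, (((i:ℕ) : ZMod p)⁻¹)^2 = 0 := by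
    rw [two_mul]
    calc _ = (∑ i ∈ Icc 1 m, (((i:ℕ) : ZMod p)⁻¹)^2) + ∑ i ∈ Icc (m+1) (p-1), (((i:ℕ) : ZMod p)⁻¹)^2 := by
          rw [hrefl]
      _ = 0 := by rw [← hsplit, hfull, hzero]
  have h2ne : (2 : ZMod p) ≠ 0 := by
    rw [show (2 : ZMod p) = ((2:ℕ) : ZMod p) by norm_num, Ne, ZMod.natCast_eq_zero_iff]
    intro hd; have := Nat.le_of_dvd (by omega) hd; omega
  exact (mul_eq_zero.mp h2W).resolve_left h2ne

theorem lehmer_congruence (p : ℕ) (hp : p.Prime) (hp3 : 3 < p) :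
    ∑ i ∈ Finset.Icc 1 ((p - 1) / 2), ((i : ZMod (p ^ 2)))⁻¹
      = -(2 * (((2 ^ (p - 1) - 1) / p : ℕ) : ZMod (p ^ 2)))
        + (p : ZMod (p ^ 2)) * (((2 ^ (p - 1) - 1) / p : ℕ) : ZMod (p ^ 2)) ^ 2 := by
  haveI : Fact p.Prime := ⟨hp⟩
  set m := (p - 1) / 2 with hm
  obtain ⟨k, hk⟩ := hp.odd_of_ne_two (by omega)
  have hmp : p = 2*m + 1 := by omega
  have hp0 : p ≠ 0 := by omega
  set q := (2^(p-1) - 1)/p with hqdef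
  -- Fermat quotient basics
  have hfermat : p ∣ 2^(p-1) - 1 := by
    have h2 : ((2:ℕ) : ZMod p) ≠ 0 := by
      rw [Ne, ZMod.natCast_eq_zero_iff]
      intro hd; have := Nat.le_of_dvd (by omega) hd; omega
    have hfe : ((2:ℕ) : ZMod p)^(p-1) = 1 := ZMod.pow_card_sub_one_eq_one h2
    rw [← ZMod.natCast_eq_zero_iff]
    have h1 : (1:ℕ) ≤ 2^(p-1) := Nat.one_le_two_pow
    rw [Nat.cast_sub h1]
    push_cast at hfe ⊢
    rw [hfe]
    ring
  have hq : 2^(p-1) = 1 + p*q := by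
    have h2 : p * q = 2^(p-1) - 1 := Nat.mul_div_cancel' hfermat
    have h1 : (1:ℕ) ≤ 2^(p-1) := Nat.one_le_two_pow
    rw [h2]
    omega
  -- units
  have hunit : ∀ (j i : ℕ), 0 < i → i < p → IsUnit ((i:ℕ) : ZMod (p^j)) := by
    intro j i h0 hlt
    rw [ZMod.isUnit_iff_coprime]
    exact Nat.Coprime.pow_right j
      (Nat.Coprime.symm ((Nat.Prime.coprime_iff_not_dvd hp).mpr
        (fun hd => absurd (Nat.le_of_dvd h0 hd) (by omega))))
  have hp3R : ((p : ZMod (p^3)))^3 = 0 := by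
    rw [← Nat.cast_pow]; exact ZMod.natCast_self _
  -- notation
  set S3 : ZMod (p^3) := ∑ i ∈ Icc 1 m, ((i:ℕ) : ZMod (p^3))⁻¹ with hS3
  set W3 : ZMod (p^3) := ∑ i ∈ Icc 1 m, (((i:ℕ) : ZMod (p^3))⁻¹)^2 with hW3
  set T3 : ZMod (p^3) := ∑ i ∈ Icc 1 m, (((2*i:ℕ)) : ZMod (p^3))⁻¹ with hT3
  set V3 : ZMod (p^3) := ∑ i ∈ Icc 1 m, ((((2*i:ℕ)) : ZMod (p^3))⁻¹)^2 with hV3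
  set A : ZMod (p^3) := ∏ i ∈ Icc 1 m, (1 + (p : ZMod (p^3)) * (-((i:ℕ) : ZMod (p^3))⁻¹)) with hA
  set B : ZMod (p^3) := ∏ i ∈ Icc 1 m, (1 + (p : ZMod (p^3)) * (-(((2*i:ℕ)) : ZMod (p^3))⁻¹)) with hB
  -- cast of the combinatorial identity
  have hkey : (∏ i ∈ Icc 1 m, ((p - i : ℕ) : ZMod (p^3)))
      = 2^m * ∏ i ∈ Icc 1 m, ((p - 2*i : ℕ) : ZMod (p^3)) := by
    have h := key_prod_ m
    rw [← hmp] at h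
    have h2 := congrArg (fun n : ℕ => (n : ZMod (p^3))) h
    push_cast at h2
    exact h2
  -- rewrite each factor
  have hfacL : ∀ i ∈ Icc 1 m, ((p - i : ℕ) : ZMod (p^3))
      = (-((i:ℕ) : ZMod (p^3))) * (1 + (p : ZMod (p^3)) * (-((i:ℕ) : ZMod (p^3))⁻¹)) := by
    intro i hi
    simp only [mem_Icc] at hi
    have hu := hunit 3 i (by omega) (by omega)
    have hinv : ((i:ℕ) : ZMod (p^3)) * ((i:ℕ) : ZMod (p^3))⁻¹ = 1 := ZMod.mul_inv_of_unit _ hu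
    have hc : ((p - i : ℕ) : ZMod (p^3)) = (p : ZMod (p^3)) - ((i:ℕ) : ZMod (p^3)) :=
      Nat.cast_sub (by omega)
    rw [hc]
    linear_combination -(p : ZMod (p^3)) * hinv
  have hfacR : ∀ i ∈ Icc 1 m, ((p - 2*i : ℕ) : ZMod (p^3))
      = (-(((2*i:ℕ)) : ZMod (p^3))) * (1 + (p : ZMod (p^3)) * (-(((2*i:ℕ)) : ZMod (p^3))⁻¹)) := by
    intro i hi
    simp only [mem_Icc] at hi
    have hu := hunit 3 (2*i) (by omega) (by omega)
    have hinv : (((2*i:ℕ)) : ZMod (p^3)) * (((2*i:ℕ)) : ZMod (p^3))⁻¹ = 1 := ZMod.mul_inv_of_unit _ hu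
    have hc : ((p - 2*i : ℕ) : ZMod (p^3)) = (p : ZMod (p^3)) - (((2*i:ℕ)) : ZMod (p^3)) :=
      Nat.cast_sub (by omega)
    rw [hc]
    linear_combination -(p : ZMod (p^3)) * hinv
  -- compute products of the leading factors
  have hicc : ∏ i ∈ Icc 1 m, (i:ℕ) = m.factorial := by
    rw [← Finset.Ico_add_one_right_eq_Icc, Finset.prod_Ico_id_eq_factorial]
  have hcardm : (Icc 1 m).card = m := by rw [Nat.card_Icc]; omega
  have hprodneg : ∏ i ∈ Icc 1 m, (-((i:ℕ) : ZMod (p^3)))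
      = (-1)^m * ((m.factorial : ℕ) : ZMod (p^3)) := by
    rw [show (fun i => -((i:ℕ) : ZMod (p^3))) = (fun i => (-1) * ((i:ℕ) : ZMod (p^3))) from by
      funext i; ring]
    rw [Finset.prod_mul_distrib, Finset.prod_const, hcardm, ← Nat.cast_prod, hicc]
  have hprodneg2 : ∏ i ∈ Icc 1 m, (-(((2*i:ℕ)) : ZMod (p^3)))
      = (-1)^m * (2^m * ((m.factorial : ℕ) : ZMod (p^3))) := by
    rw [show (fun i => -(((2*i:ℕ)) : ZMod (p^3))) = (fun i => ((-1) * 2) * ((i:ℕ) : ZMod (p^3))) from by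
      funext i; push_cast; ring]
    rw [Finset.prod_mul_distrib, Finset.prod_const, hcardm, ← Nat.cast_prod, hicc,
      show ((-1 : ZMod (p^3)) * 2)^m = (-1)^m * 2^m from mul_pow _ _ m]
    ring
  -- combine into the cancelled identity
  have hMu : IsUnit ((-1)^m * ((m.factorial : ℕ) : ZMod (p^3))) := by
    apply IsUnit.mul (IsUnit.pow m (isUnit_one.neg))
    rw [ZMod.isUnit_iff_coprime]
    apply Nat.Coprime.pow_right
    apply Nat.Coprime.symm
    rw [Nat.Prime.coprime_iff_not_dvd hp, hp.dvd_factorial]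
    omega
  have hAB4 : A = (2^m * 2^m) * B := by
    apply hMu.mul_left_cancel
    calc ((-1)^m * ((m.factorial : ℕ) : ZMod (p^3))) * A
        = ∏ i ∈ Icc 1 m, ((p - i : ℕ) : ZMod (p^3)) := by
          rw [Finset.prod_congr rfl hfacL, Finset.prod_mul_distrib, hprodneg]
      _ = 2^m * ∏ i ∈ Icc 1 m, ((p - 2*i : ℕ) : ZMod (p^3)) := hkey
      _ = 2^m * (((-1)^m * (2^m * ((m.factorial : ℕ) : ZMod (p^3)))) * B) := by
          rw [Finset.prod_congr rfl hfacR, Finset.prod_mul_distrib, hprodneg2]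
      _ = ((-1)^m * ((m.factorial : ℕ) : ZMod (p^3))) * ((2^m * 2^m) * B) := by ring
  have h4m : (2 : ZMod (p^3))^m * 2^m = 1 + (p : ZMod (p^3)) * ((q:ℕ) : ZMod (p^3)) := by
    have h1 : (2 : ZMod (p^3))^m * 2^m = ((2^(m+m) : ℕ) : ZMod (p^3)) := by push_cast [pow_add]; ring
    rw [h1, show m + m = p - 1 by omega, hq]
    push_cast
    ring
  have hAB : A = (1 + (p : ZMod (p^3)) * ((q:ℕ) : ZMod (p^3))) * B := by rw [hAB4, h4m]
  -- expansions
  have hEA : 2*A = 2 + 2*(p : ZMod (p^3))*(-S3) + (p : ZMod (p^3))^2*((-S3)^2 - W3) := by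
    rw [hA, hS3, hW3]
    have h := prod_expand_ (p : ZMod (p^3)) hp3R (Icc 1 m) (fun i => -((i:ℕ) : ZMod (p^3))⁻¹)
    simp only [neg_sq, Finset.sum_neg_distrib] at h
    linear_combination h
  have hEB : 2*B = 2 + 2*(p : ZMod (p^3))*(-T3) + (p : ZMod (p^3))^2*((-T3)^2 - V3) := by
    rw [hB, hT3, hV3]
    have h := prod_expand_ (p : ZMod (p^3)) hp3R (Icc 1 m) (fun i => -(((2*i:ℕ)) : ZMod (p^3))⁻¹)
    simp only [neg_sq, Finset.sum_neg_distrib] at h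
    linear_combination h
  have hterm : ∀ i ∈ Icc 1 m, ((i:ℕ) : ZMod (p^3))⁻¹ = 2 * (((2*i:ℕ)) : ZMod (p^3))⁻¹ := by
    intro i hi
    simp only [mem_Icc] at hi
    have hinv2 : (((2*i:ℕ)) : ZMod (p^3)) * (((2*i:ℕ)) : ZMod (p^3))⁻¹ = 1 :=
      ZMod.mul_inv_of_unit _ (hunit 3 (2*i) (by omega) (by omega))
    have hc : (((2*i:ℕ)) : ZMod (p^3)) = 2 * ((i:ℕ) : ZMod (p^3)) := by push_cast; ring
    nth_rewrite 1 [hc] at hinv2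
    exact zmod_inv_eq_of_mul_ _ _ _ (hunit 3 i (by omega) (by omega)) (by linear_combination hinv2)
  have hTS : 2*T3 = S3 := by
    rw [hT3, hS3, Finset.mul_sum]
    exact (Finset.sum_congr rfl fun i hi => (hterm i hi).symm)
  have hVW : W3 = 4*V3 := by
    rw [hW3, hV3, Finset.mul_sum]
    refine Finset.sum_congr rfl fun i hi => ?_
    rw [hterm i hi]; ring
  have hEB8 : 8*B = 8 - 4*(p : ZMod (p^3))*S3 + (p : ZMod (p^3))^2*(S3^2 - W3) := by
    linear_combination 4*hEB + (-4*(p : ZMod (p^3)) + (p : ZMod (p^3))^2*(2*T3 + S3))*hTS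
      + (p : ZMod (p^3))^2*hVW
  have E1 : (p : ZMod (p^3)) * (4*S3 + 8*((q:ℕ) : ZMod (p^3)))
      = (p : ZMod (p^3))^2 * (3*S3^2 - 3*W3 + 4*((q:ℕ) : ZMod (p^3))*S3) := by
    linear_combination 4*hEA - 8*hAB - (1 + (p : ZMod (p^3))*((q:ℕ) : ZMod (p^3)))*hEB8
      - ((q:ℕ) : ZMod (p^3))*(S3^2 - W3)*hp3R
  -- descend to ZMod (p^2)
  set S2 : ZMod (p^2) := ∑ i ∈ Icc 1 m, ((i:ℕ) : ZMod (p^2))⁻¹ with hS2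
  set W2 : ZMod (p^2) := ∑ i ∈ Icc 1 m, (((i:ℕ) : ZMod (p^2))⁻¹)^2 with hW2
  have hdesc := zmod_descent_ p hp0 (4*S3 + 8*((q:ℕ) : ZMod (p^3)))
    (3*S3^2 - 3*W3 + 4*((q:ℕ) : ZMod (p^3))*S3) E1
  have hφS : ZMod.castHom (pow_dvd_pow p (by norm_num : 2 ≤ 3)) (ZMod (p^2)) S3 = S2 := by
    rw [hS3, hS2, map_sum]
    refine Finset.sum_congr rfl fun i hi => ?_
    simp only [mem_Icc] at hi
    rw [zmod_cast_inv_ _ _ (hunit 3 i (by omega) (by omega)), map_natCast]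
  have hφW : ZMod.castHom (pow_dvd_pow p (by norm_num : 2 ≤ 3)) (ZMod (p^2)) W3 = W2 := by
    rw [hW3, hW2, map_sum]
    refine Finset.sum_congr rfl fun i hi => ?_
    simp only [mem_Icc] at hi
    rw [map_pow, zmod_cast_inv_ _ _ (hunit 3 i (by omega) (by omega)), map_natCast]
  have E2 : 4*S2 + 8*((q:ℕ) : ZMod (p^2))
      = (p : ZMod (p^2)) * (3*S2^2 - 3*W2 + 4*((q:ℕ) : ZMod (p^2))*S2) := by
    simp only [map_add, map_mul, map_pow, map_sub, map_ofNat, map_natCast, hφS, hφW] at hdesc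
    linear_combination hdesc
  -- mod p facts
  have hψS : ZMod.castHom (dvd_pow_self p (by norm_num : 2 ≠ 0)) (ZMod p) S2
      = ∑ i ∈ Icc 1 m, ((i:ℕ) : ZMod p)⁻¹ := by
    rw [hS2, map_sum]
    refine Finset.sum_congr rfl fun i hi => ?_
    simp only [mem_Icc] at hi
    rw [zmod_cast_inv_ _ _ (hunit 2 i (by omega) (by omega)), map_natCast]
  have hψW : ZMod.castHom (dvd_pow_self p (by norm_num : 2 ≠ 0)) (ZMod p) W2
      = ∑ i ∈ Icc 1 m, (((i:ℕ) : ZMod p)⁻¹)^2 := by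
    rw [hW2, map_sum]
    refine Finset.sum_congr rfl fun i hi => ?_
    simp only [mem_Icc] at hi
    rw [map_pow, zmod_cast_inv_ _ _ (hunit 2 i (by omega) (by omega)), map_natCast]
  have hW1 : ∑ i ∈ Icc 1 m, (((i:ℕ) : ZMod p)⁻¹)^2 = 0 := by
    have := sq_inv_sum_zero_ p hp hp3
    rwa [← hm] at this
  have hE2ψ : 4*(∑ i ∈ Icc 1 m, ((i:ℕ) : ZMod p)⁻¹) + 8*((q:ℕ) : ZMod p) = 0 := by
    have h := congrArg (ZMod.castHom (dvd_pow_self p (by norm_num : 2 ≠ 0)) (ZMod p)) E2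
    simp only [map_add, map_mul, map_pow, map_sub, map_ofNat, map_natCast, hψS, hψW] at h
    rw [ZMod.natCast_self] at h
    linear_combination h
  have h4ne : (4 : ZMod p) ≠ 0 := by
    have : ((4:ℕ) : ZMod p) ≠ 0 := by
      rw [Ne, ZMod.natCast_eq_zero_iff]
      intro hd; have := Nat.le_of_dvd (by omega) hd; omega
    simpa using this
  have hS1 : (∑ i ∈ Icc 1 m, ((i:ℕ) : ZMod p)⁻¹) = -2*((q:ℕ) : ZMod p) := by
    apply mul_left_cancel₀ h4ne
    linear_combination hE2ψ
  -- replace bracket mod p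
  have hbr : (p : ZMod (p^2)) * (3*S2^2 - 3*W2 + 4*((q:ℕ) : ZMod (p^2))*S2)
      = (p : ZMod (p^2)) * (4*((q:ℕ) : ZMod (p^2))^2) := by
    apply zmod_scale_ p hp0
    simp only [map_add, map_mul, map_pow, map_sub, map_ofNat, map_natCast, hψS, hψW]
    rw [hS1, hW1]
    ring
  have E3 : 4*S2 + 8*((q:ℕ) : ZMod (p^2)) = (p : ZMod (p^2)) * (4*((q:ℕ) : ZMod (p^2))^2) := by
    rw [E2, hbr]
  have h4u : IsUnit (4 : ZMod (p^2)) := by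
    have : IsUnit (((4:ℕ)) : ZMod (p^2)) := by
      rw [ZMod.isUnit_iff_coprime]
      apply Nat.Coprime.pow_right
      apply Nat.Coprime.symm
      rw [Nat.Prime.coprime_iff_not_dvd hp]
      intro hd; have := Nat.le_of_dvd (by omega) hd; omega
    simpa using this
  apply h4u.mul_left_cancel
  linear_combination E3
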